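/- arXiv:0808.2382 — 2 statements merged into one kernel-verified Lean document; each statement's English description precedes it below -/
import Mathlib

section
/- Let $n \ge 2$ and $\eta \in \mathbb{Z}_2^n$ with $|\eta|$ even. Let $A$ be the adjacency matrix of the augmented hypercube $Q_n^\eta$ and let $\psi_t = \exp(-itA)\delta_{0_n}$ be the continuous-time quantum walk starting at the vertex $0_n$. Then at time $t^\star = \pi/4$ the walk is instantaneous uniform mixing: $|\psi_{t^\star}(v)|^2 = 2^{-n}$ for every vertex $v \in \mathbb{Z}_2^n$. -/
open Matrix Complex Finset

/-- Hamming weight of a vector in `(ZMod 2)^n`. -/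
def wt {n : ℕ} (x : Fin n → ZMod 2) : ℕ := (Finset.univ.filter fun i => x i = 1).card

/-- Inner product modulo 2. -/
def dot {n : ℕ} (a x : Fin n → ZMod 2) : ZMod 2 := ∑ i, a i * x i

/-- Adjacency matrix of the augmented hypercube `Q_n^η`:
`A[x,y] = 1` iff `x ⊕ y` is a standard unit vector or equals `η`. -/
def adjQeta {n : ℕ} (η : Fin n → ZMod 2) :
    Matrix (Fin n → ZMod 2) (Fin n → ZMod 2) ℂ :=
  Matrix.of fun x y =>
    if (∃ j : Fin n, x + y = Pi.single j 1) ∨ x + y = η then 1 else 0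

/-- Continuous-time quantum walk `ψ_t = exp(-itA) ψ₀`. -/
noncomputable def walk {V : Type*} [Fintype V] [DecidableEq V]
    (A : Matrix V V ℂ) (ψ0 : V → ℂ) (t : ℝ) : V → ℂ :=
  (NormedSpace.exp ((-(t : ℂ) * Complex.I) • A)).mulVec ψ0

/-! ### Auxiliary scalar lemmas -/

noncomputable def eps (s : ZMod 2) : ℂ := (-1 : ℂ) ^ s.val

@[simp] lemma val0 : (0 : ZMod 2).val = 0 := rfl
@[simp] lemma val1 : (1 : ZMod 2).val = 1 := rfl
@[simp] lemma val11 : ((1 : ZMod 2) + 1).val = 0 := rfl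

lemma eps_zero : eps 0 = 1 := by simp [eps]
lemma eps_one : eps 1 = -1 := by simp [eps]
lemma eps_add (s t : ZMod 2) : eps (s + t) = eps s * eps t := by
  rcases (show ∀ s : ZMod 2, s = 0 ∨ s = 1 by decide) s with rfl | rfl <;>
    rcases (show ∀ s : ZMod 2, s = 0 ∨ s = 1 by decide) t with rfl | rfl <;>
    simp only [eps, add_zero, zero_add, val0, val1, val11] <;> norm_num
lemma eps_pm (s : ZMod 2) : eps s = 1 ∨ eps s = -1 := by
  rcases (show ∀ s : ZMod 2, s = 0 ∨ s = 1 by decide) s with rfl | rfl <;> simp [eps]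

lemma eps_sum {ι : Type*} (s : Finset ι) (f : ι → ZMod 2) :
    eps (∑ i ∈ s, f i) = ∏ i ∈ s, eps (f i) := by
  induction s using Finset.cons_induction with
  | empty => simp [eps_zero]
  | cons a s ha ih => rw [Finset.sum_cons, Finset.prod_cons, eps_add, ih]

lemma sum_zmod2 (f : ZMod 2 → ℂ) : ∑ s : ZMod 2, f s = f 0 + f 1 := by
  have h : (Finset.univ : Finset (ZMod 2)) = {0, 1} := by decide
  rw [h, Finset.sum_insert (by decide), Finset.sum_singleton]

section DotLemmas

variable {n : ℕ}

lemma dot_comm (a x : Fin n → ZMod 2) : dot a x = dot x a := by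
  simp [dot, mul_comm]
lemma dot_add (a x y : Fin n → ZMod 2) : dot a (x + y) = dot a x + dot a y := by
  simp [dot, mul_add, Finset.sum_add_distrib]
@[simp] lemma dot_zero (a : Fin n → ZMod 2) : dot a 0 = 0 := by simp [dot]
@[simp] lemma zero_dot (a : Fin n → ZMod 2) : dot 0 a = 0 := by simp [dot]
lemma dot_single (a : Fin n → ZMod 2) (j : Fin n) : dot a (Pi.single j 1) = a j := by
  simp [dot, Pi.single_apply, mul_ite, Finset.sum_ite_eq']

lemma eps_dot_expand (a w : Fin n → ZMod 2) :
    eps (dot a w) = ∏ j, eps (a j * w j) := by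
  rw [dot, eps_sum]

/-- key orthogonality relation for the characters -/
lemma sum_eps (c : Fin n → ZMod 2) :
    ∑ x : Fin n → ZMod 2, eps (dot c x) = if c = 0 then (2 : ℂ) ^ n else 0 := by
  have h1 : ∀ x, eps (dot c x) = ∏ j, eps (c j * x j) := fun x => eps_dot_expand c x
  simp_rw [h1]
  rw [← Fintype.piFinset_univ,
    ← Finset.prod_univ_sum (fun _ => (Finset.univ : Finset (ZMod 2)))
      (fun j s => eps (c j * s))]
  have h2 : ∀ j, ∑ s : ZMod 2, eps (c j * s) = 1 + eps (c j) := by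
    intro j; rw [sum_zmod2]; simp [eps_zero]
  simp_rw [h2]
  by_cases hc : c = 0
  · subst hc; simp [eps_zero]; norm_num
  · rw [if_neg hc]
    obtain ⟨j, hj⟩ : ∃ j, c j ≠ 0 := by
      by_contra h; push_neg at h; exact hc (funext fun j => h j)
    have hj1 : c j = 1 := by
      have : ∀ s : ZMod 2, s ≠ 0 → s = 1 := by decide
      exact this _ hj
    refine Finset.prod_eq_zero (Finset.mem_univ j) ?_
    rw [hj1]; simp [eps]

lemma addself (x : Fin n → ZMod 2) : x + x = 0 := by
  funext i
  exact CharTwo.add_self_eq_zero _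

lemma add_eq_iff (x y u : Fin n → ZMod 2) : x + y = u ↔ y = x + u := by
  constructor
  · rintro rfl; rw [← add_assoc, addself, zero_add]
  · rintro rfl; rw [← add_assoc, addself, zero_add]

lemma single_inj {j j' : Fin n} (h : (Pi.single j 1 : Fin n → ZMod 2) = Pi.single j' 1) :
    j = j' := by
  by_contra hne
  have := congrFun h j
  simp [Pi.single_apply, hne] at this

end DotLemmas

/-- translation matrix of the group `(ZMod 2)^n` -/
def T {n : ℕ} (u : Fin n → ZMod 2) : Matrix (Fin n → ZMod 2) (Fin n → ZMod 2) ℂ :=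
  Matrix.of fun x y => if x + y = u then 1 else 0

section MatrixLemmas

variable {n : ℕ}

lemma adj_eq (η : Fin n → ZMod 2) (hne : ∀ j, η ≠ Pi.single j 1) :
    adjQeta η = (∑ j, T (Pi.single j 1)) + T η := by
  ext x y
  rw [Matrix.add_apply, Matrix.sum_apply]
  show (if (∃ j : Fin n, x + y = Pi.single j 1) ∨ x + y = η then (1:ℂ) else 0) = _
  by_cases h1 : ∃ j : Fin n, x + y = Pi.single j 1
  · obtain ⟨j0, hj0⟩ := h1
    have h2 : x + y ≠ η := fun hh => hne j0 (hh.symm.trans hj0)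
    rw [if_pos (Or.inl ⟨j0, hj0⟩)]
    have hsum : ∑ j, (T (Pi.single j 1)) x y = 1 := by
      rw [Finset.sum_eq_single j0]
      · simp [T, hj0]
      · intro j _ hj
        simp only [T, Matrix.of_apply, ite_eq_right_iff]
        intro hh
        exact absurd (single_inj (hj0 ▸ hh :
          (Pi.single j0 1 : Fin n → ZMod 2) = Pi.single j 1)).symm hj
      · intro h; exact absurd (Finset.mem_univ j0) h
    rw [hsum]
    simp [T, h2]
  · by_cases h2 : x + y = η
    · rw [if_pos (Or.inr h2)]
      have hsum : ∑ j, (T (Pi.single j 1)) x y = 0 := by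
        refine Finset.sum_eq_zero fun j _ => ?_
        simp only [T, Matrix.of_apply, ite_eq_right_iff]
        intro hh; exact absurd ⟨j, hh⟩ h1
      rw [hsum, zero_add]
      simp [T, h2]
    · rw [if_neg (by tauto)]
      have hsum : ∑ j, (T (Pi.single j 1)) x y = 0 := by
        refine Finset.sum_eq_zero fun j _ => ?_
        simp only [T, Matrix.of_apply, ite_eq_right_iff]
        intro hh; exact absurd ⟨j, hh⟩ h1
      rw [hsum, zero_add]
      simp [T, h2]

lemma sum_eps_coord (a : Fin n → ZMod 2) :
    ∑ j, eps (a j) = (n : ℂ) - 2 * (wt a : ℂ) := by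
  have h : ∀ j, eps (a j) = 1 - 2 * (if a j = 1 then (1:ℂ) else 0) := by
    intro j
    have : ∀ s : ZMod 2, s = 0 ∨ s = 1 := by decide
    rcases this (a j) with h | h <;> rw [h] <;> simp [eps_zero, eps_one] <;> norm_num
  simp_rw [h]
  rw [Finset.sum_sub_distrib, ← Finset.mul_sum, Finset.sum_boole]
  simp [wt]

/-- Character matrix (columns indexed by characters). -/
noncomputable def Pm (n : ℕ) : Matrix (Fin n → ZMod 2) (Fin n → ZMod 2) ℂ :=
  Matrix.of fun x a => eps (dot a x)

/-- Eigenvalues of the augmented hypercube. -/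
noncomputable def lam {n : ℕ} (η a : Fin n → ZMod 2) : ℂ :=
  (n : ℂ) - 2 * (wt a : ℂ) + eps (dot a η)

lemma TP (u : Fin n → ZMod 2) :
    T u * Pm n = Matrix.of fun x a => eps (dot a u) * eps (dot a x) := by
  ext x a
  rw [Matrix.mul_apply]
  simp only [T, Pm, Matrix.of_apply]
  calc ∑ y, (if x + y = u then (1:ℂ) else 0) * eps (dot a y)
      = ∑ y, (if y = x + u then eps (dot a y) else 0) := by
        refine Finset.sum_congr rfl fun y _ => ?_
        by_cases h : y = x + u
        · rw [if_pos ((add_eq_iff x y u).mpr h), if_pos h, one_mul]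
        · rw [if_neg (fun hh => h ((add_eq_iff x y u).mp hh)), if_neg h, zero_mul]
    _ = eps (dot a (x + u)) := by
        rw [Finset.sum_ite_eq' univ (x+u) (fun y => eps (dot a y))]; simp
    _ = eps (dot a u) * eps (dot a x) := by rw [dot_add, eps_add, mul_comm]

lemma PP : Pm n * Pm n = ((2:ℂ)^n) • 1 := by
  ext x y
  rw [Matrix.mul_apply]
  simp only [Pm, Matrix.of_apply]
  have h1 : ∀ a, eps (dot a x) * eps (dot y a) = eps (dot (x + y) a) := by
    intro a
    rw [dot_comm y a, ← eps_add, ← dot_add, dot_comm]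
  simp_rw [h1]
  rw [sum_eps]
  have : x + y = 0 ↔ x = y := by
    constructor
    · intro h; have := (add_eq_iff x y 0).mp h; simp at this; exact this.symm
    · rintro rfl; exact addself x
  rw [Matrix.smul_apply, Matrix.one_apply]
  by_cases h : x = y
  · rw [if_pos (this.mpr h), if_pos h]; simp
  · rw [if_neg (fun hh => h (this.mp hh)), if_neg h]; simp

lemma AP (η : Fin n → ZMod 2) (hne : ∀ j, η ≠ Pi.single j 1) :
    adjQeta η * Pm n = Pm n * Matrix.diagonal (lam η) := by
  rw [adj_eq η hne, add_mul, Finset.sum_mul]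
  ext x a
  simp_rw [TP]
  rw [Matrix.add_apply, Matrix.sum_apply, Matrix.mul_diagonal]
  simp only [Matrix.of_apply, Pm]
  simp_rw [dot_single]
  rw [← Finset.sum_mul, lam, sum_eps_coord]
  ring

/-- Spectral formula for the quantum walk amplitude. -/
lemma walk_eq (η : Fin n → ZMod 2) (hne : ∀ j, η ≠ Pi.single j 1) (t : ℝ)
    (v : Fin n → ZMod 2) :
    walk (adjQeta η) (Pi.single (0 : Fin n → ZMod 2) 1) t v
      = ((2:ℂ)^n)⁻¹ * ∑ a, eps (dot a v) * Complex.exp ((-(t:ℂ) * Complex.I) * lam η a) := by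
  classical
  set c : ℂ := -(t:ℂ) * Complex.I with hc
  have h2 : ((2:ℂ)^n) ≠ 0 := pow_ne_zero _ two_ne_zero
  set Pinv : Matrix (Fin n → ZMod 2) (Fin n → ZMod 2) ℂ := ((2:ℂ)^n)⁻¹ • Pm n with hPinv
  have hPP1 : Pm n * Pinv = 1 := by
    rw [hPinv, Matrix.mul_smul, PP, smul_smul, inv_mul_cancel₀ h2, one_smul]
  have hPP2 : Pinv * Pm n = 1 := by
    rw [hPinv, Matrix.smul_mul, PP, smul_smul, inv_mul_cancel₀ h2, one_smul]
  set U : (Matrix (Fin n → ZMod 2) (Fin n → ZMod 2) ℂ)ˣ := ⟨Pm n, Pinv, hPP1, hPP2⟩ with hU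
  have hUinv : (U⁻¹).val = Pinv := rfl
  have hA : adjQeta η = U.val * Matrix.diagonal (lam η) * (U⁻¹).val := by
    rw [hUinv]
    show adjQeta η = Pm n * Matrix.diagonal (lam η) * Pinv
    calc adjQeta η = adjQeta η * (Pm n * Pinv) := by rw [hPP1, mul_one]
      _ = (adjQeta η * Pm n) * Pinv := by rw [mul_assoc]
      _ = Pm n * Matrix.diagonal (lam η) * Pinv := by rw [AP η hne]
  have hsmul : c • adjQeta η = U.val * (Matrix.diagonal (c • lam η)) * (U⁻¹).val := by
    rw [hA, Matrix.diagonal_smul, Matrix.mul_smul, Matrix.smul_mul]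
  have hexp : NormedSpace.exp (c • adjQeta η)
      = U.val * Matrix.diagonal (fun a => Complex.exp (c * lam η a)) * (U⁻¹).val := by
    rw [hsmul, Matrix.exp_units_conj U, Matrix.exp_diagonal]
    congr 1
    congr 1
    rw [Pi.exp_def]
    funext a
    rw [← Complex.exp_eq_exp_ℂ]
    simp
  rw [walk, hexp, Matrix.mulVec_single, hUinv]
  show (Pm n * Matrix.diagonal (fun a => Complex.exp (c * lam η a)) * Pinv) v 0 * 1 = _
  rw [mul_one, Matrix.mul_apply]
  have hterm : ∀ a, (Pm n * Matrix.diagonal (fun a => Complex.exp (c * lam η a))) v a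
      * Pinv a 0 = ((2:ℂ)^n)⁻¹ * (eps (dot a v) * Complex.exp (c * lam η a)) := by
    intro a
    rw [Matrix.mul_diagonal, hPinv, Matrix.smul_apply]
    have : Pm n a 0 = 1 := by
      show eps (dot 0 a) = 1
      rw [zero_dot, eps_zero]
    rw [this]
    show Pm n v a * Complex.exp (c * lam η a) * (((2:ℂ)^n)⁻¹ * 1) = _
    show eps (dot a v) * Complex.exp (c * lam η a) * (((2:ℂ)^n)⁻¹ * 1) = _
    ring
  simp_rw [hterm]
  rw [← Finset.mul_sum]

end MatrixLemmas

/-! ### Evaluation at `t = π/4` -/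

noncomputable abbrev cst : ℂ := -(↑(Real.pi/4) : ℂ) * Complex.I

lemma sqrt2_ne : (Real.sqrt 2 : ℝ) ≠ 0 := by positivity
lemma sqrt2_sq : (Real.sqrt 2 : ℝ) * Real.sqrt 2 = 2 := Real.mul_self_sqrt (by norm_num)

lemma exp_cst_eps (s : ZMod 2) :
    Complex.exp (cst * eps s) = (Real.sqrt 2 : ℂ)⁻¹ * (1 - Complex.I * eps s) := by
  have hr : (Real.sqrt 2 : ℝ)⁻¹ = Real.sqrt 2 / 2 := by
    rw [eq_div_iff (two_ne_zero), inv_mul_eq_div, div_eq_iff sqrt2_ne]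
    linarith [sqrt2_sq]
  have hrc : ((Real.sqrt 2 : ℂ))⁻¹ = ((Real.sqrt 2 / 2 : ℝ) : ℂ) := by
    rw [← Complex.ofReal_inv, hr]
  rcases eps_pm s with h | h <;> rw [h]
  · have : cst * 1 = (↑(-(Real.pi/4)) : ℂ) * Complex.I := by
      simp [cst]
    rw [this, Complex.exp_mul_I, ← Complex.ofReal_cos, ← Complex.ofReal_sin,
      Real.cos_neg, Real.sin_neg, Real.cos_pi_div_four, Real.sin_pi_div_four, hrc]
    push_cast
    ring
  · have : cst * (-1) = (↑((Real.pi/4)) : ℂ) * Complex.I := by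
      simp [cst]
    rw [this, Complex.exp_mul_I, ← Complex.ofReal_cos, ← Complex.ofReal_sin,
      Real.cos_pi_div_four, Real.sin_pi_div_four, hrc]
    push_cast
    ring

lemma exp_neg2cst : Complex.exp (-2 * cst) = Complex.I := by
  have : -2 * cst = (↑(Real.pi/2) : ℂ) * Complex.I := by
    push_cast [cst]; ring
  rw [this, Complex.exp_mul_I, ← Complex.ofReal_cos, ← Complex.ofReal_sin,
    Real.cos_pi_div_two, Real.sin_pi_div_two]
  simp

section TvLemmas

variable {n : ℕ}

lemma val_eq_ite (s : ZMod 2) : s.val = if s = 1 then 1 else 0 := by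
  fin_cases s <;> rfl

lemma wt_eq_sum_val (a : Fin n → ZMod 2) : wt a = ∑ j, (a j).val := by
  rw [wt, Finset.card_filter]
  exact Finset.sum_congr rfl fun j _ => (val_eq_ite (a j)).symm

/-- the character-sum with `I`-weights -/
noncomputable def Tv {n : ℕ} (w : Fin n → ZMod 2) : ℂ :=
  ∑ a : Fin n → ZMod 2, eps (dot a w) * Complex.I ^ (wt a)

lemma Tv_prod (w : Fin n → ZMod 2) : Tv w = ∏ j, (1 + eps (w j) * Complex.I) := by
  have h : ∀ a : Fin n → ZMod 2, eps (dot a w) * Complex.I ^ (wt a)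
      = ∏ j, (eps (a j * w j) * Complex.I ^ (a j).val) := by
    intro a
    rw [Finset.prod_mul_distrib, ← eps_dot_expand, Finset.prod_pow_eq_pow_sum,
      ← wt_eq_sum_val]
  rw [Tv]
  simp_rw [h]
  rw [← Fintype.piFinset_univ,
    ← Finset.prod_univ_sum (fun _ => (Finset.univ : Finset (ZMod 2)))
      (fun j s => eps (s * w j) * Complex.I ^ s.val)]
  refine Finset.prod_congr rfl fun j _ => ?_
  rw [sum_zmod2 (fun s => eps (s * w j) * Complex.I ^ s.val)]
  simp [eps_zero]

lemma factor_shift (s t : ZMod 2) :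
    1 + eps (s + t) * Complex.I
      = (-(Complex.I * eps s)) ^ t.val * (1 + eps s * Complex.I) := by
  rcases (show ∀ s : ZMod 2, s = 0 ∨ s = 1 by decide) s with rfl | rfl <;>
    rcases (show ∀ s : ZMod 2, s = 0 ∨ s = 1 by decide) t with rfl | rfl
  all_goals simp only [add_zero, zero_add, val0, val1, val11, eps_zero, eps_one, eps_add]
  · ring
  · linear_combination Complex.I_sq
  · ring
  · linear_combination Complex.I_sq

def PM (z : ℂ) : Prop := z = 1 ∨ z = -1

lemma PM_mul {z w : ℂ} (hz : PM z) (hw : PM w) : PM (z * w) := by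
  rcases hz with h | h <;> rcases hw with h' | h' <;> subst h <;> subst h' <;>
    simp [PM]
lemma PM_one : PM 1 := Or.inl rfl
lemma PM_neg_one : PM (-1) := Or.inr rfl
lemma PM_pow {z : ℂ} (hz : PM z) (m : ℕ) : PM (z ^ m) := by
  induction m with
  | zero => simpa using PM_one
  | succ k ih => rw [pow_succ]; exact PM_mul ih hz
lemma PM_eps (s : ZMod 2) : PM (eps s) := eps_pm s

lemma Tv_shift (v η : Fin n → ZMod 2) (hη : Even (wt η)) :
    ∃ r : ℂ, PM r ∧ Tv (v + η) = r * Tv v := by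
  refine ⟨∏ j, (-(Complex.I * eps (v j))) ^ (η j).val, ?_, ?_⟩
  · have hsplit : ∏ j, (-(Complex.I * eps (v j))) ^ (η j).val
        = (-Complex.I) ^ (wt η) * ∏ j, (eps (v j)) ^ (η j).val := by
      rw [wt_eq_sum_val, ← Finset.prod_pow_eq_pow_sum, ← Finset.prod_mul_distrib]
      refine Finset.prod_congr rfl fun j _ => ?_
      rw [← mul_pow]
      ring_nf
    rw [hsplit]
    refine PM_mul ?_ ?_
    · obtain ⟨k, hk⟩ := hη
      rw [hk, ← two_mul, pow_mul]
      have h2 : (-Complex.I) ^ 2 = -1 := by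
        rw [sq]; ring_nf; simp [Complex.I_sq]
      rw [h2]
      exact PM_pow PM_neg_one k
    · exact Finset.prod_induction _ PM (fun a b ha hb => PM_mul ha hb) PM_one
        fun j _ => PM_pow (PM_eps (v j)) _
  · rw [Tv_prod, Tv_prod, ← Finset.prod_mul_distrib]
    refine Finset.prod_congr rfl fun j _ => ?_
    rw [Pi.add_apply, factor_shift]

lemma abs_one_add_pm_mul_I {z : ℂ} (h : z = 1 ∨ z = -1) :
    ‖1 + z * Complex.I‖ = Real.sqrt 2 := by
  rcases h with h | h <;> subst h <;>
  · rw [Complex.norm_def]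
    congr 1
    simp [Complex.normSq_apply]
    norm_num

lemma abs_one_sub_I_mul_pm {r : ℂ} (h : PM r) :
    ‖1 - Complex.I * r‖ = Real.sqrt 2 := by
  have := abs_one_add_pm_mul_I (z := -r) (by rcases h with h | h <;> subst h <;> simp [PM])
  calc ‖1 - Complex.I * r‖ = ‖1 + (-r) * Complex.I‖ := by ring_nf
    _ = Real.sqrt 2 := this

lemma abs_exp_cst_n (n : ℕ) : ‖Complex.exp (cst * n)‖ = 1 := by
  rw [Complex.norm_exp]
  have : (cst * n).re = 0 := by simp [cst]
  rw [this, Real.exp_zero]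

lemma wt_single (j : Fin n) : wt (Pi.single j 1 : Fin n → ZMod 2) = 1 := by
  rw [wt]
  have : (Finset.univ.filter fun i => (Pi.single j 1 : Fin n → ZMod 2) i = 1) = {j} := by
    ext i
    simp only [Finset.mem_filter, Finset.mem_univ, true_and, Finset.mem_singleton,
      Pi.single_apply]
    by_cases h : i = j
    · subst h; simp
    · simp [h]
  rw [this, Finset.card_singleton]

lemma sum_decomp (η v : Fin n → ZMod 2) :
    ∑ a, eps (dot a v) * Complex.exp (cst * lam η a)
      = Complex.exp (cst * n) * (Real.sqrt 2 : ℂ)⁻¹ * (Tv v - Complex.I * Tv (v + η)) := by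
  have hterm : ∀ a : Fin n → ZMod 2, eps (dot a v) * Complex.exp (cst * lam η a)
      = Complex.exp (cst * n) * (Real.sqrt 2 : ℂ)⁻¹ *
        (eps (dot a v) * Complex.I ^ (wt a)
          - Complex.I * (eps (dot a (v + η)) * Complex.I ^ (wt a))) := by
    intro a
    have h1 : cst * lam η a = (cst * n + (wt a : ℂ) * (-2 * cst)) + cst * eps (dot a η) := by
      rw [lam]; ring
    rw [h1, Complex.exp_add, Complex.exp_add, Complex.exp_nat_mul, exp_neg2cst,
      exp_cst_eps, dot_add, eps_add]
    ring
  simp_rw [hterm]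
  rw [← Finset.mul_sum, Finset.sum_sub_distrib, ← Finset.mul_sum]
  rfl

end TvLemmas

/-- If `|η|` is even, the quantum walk on `Q_n^η` starting at `0_n` is
instantaneous uniform mixing at time `π/4`. -/
theorem augmented_hypercube_uniform_mixing_of_even (n : ℕ) (hn : 2 ≤ n)
    (η : Fin n → ZMod 2) (hη : Even (wt η)) :
    ∀ v : Fin n → ZMod 2,
      ‖walk (adjQeta η) (Pi.single (0 : Fin n → ZMod 2) 1)
        (Real.pi / 4) v‖ ^ 2 = 1 / 2 ^ n := by
  intro v
  have hne : ∀ j, η ≠ Pi.single j 1 := by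
    intro j h
    rw [h] at hη
    rw [wt_single] at hη
    simp at hη
  rw [walk_eq η hne (Real.pi/4) v]
  have : ∀ a : Fin n → ZMod 2,
      eps (dot a v) * Complex.exp ((-(↑(Real.pi/4) : ℂ) * Complex.I) * lam η a)
        = eps (dot a v) * Complex.exp (cst * lam η a) := fun a => rfl
  simp_rw [this]
  rw [sum_decomp]
  obtain ⟨r, hr, hshift⟩ := Tv_shift v η hη
  rw [hshift]
  have hfac : Complex.exp (cst * n) * (Real.sqrt 2 : ℂ)⁻¹ * (Tv v - Complex.I * (r * Tv v))
      = Complex.exp (cst * n) * (Real.sqrt 2 : ℂ)⁻¹ * ((1 - Complex.I * r) * Tv v) := by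
    ring
  rw [hfac]
  have habsTv : ‖Tv v‖ = Real.sqrt 2 ^ n := by
    rw [Tv_prod, norm_prod]
    rw [Finset.prod_congr rfl fun j _ => abs_one_add_pm_mul_I (eps_pm (v j))]
    simp
  rw [norm_mul, norm_mul, norm_mul, norm_mul, norm_inv, norm_inv,
    abs_exp_cst_n, abs_one_sub_I_mul_pm hr, habsTv]
  have h2 : ‖((2:ℂ)^n)‖ = 2 ^ n := by
    rw [norm_pow, Complex.norm_two]
  have hs : ‖((Real.sqrt 2 : ℂ))‖ = Real.sqrt 2 := by
    rw [Complex.norm_of_nonneg (Real.sqrt_nonneg 2)]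
  rw [h2, hs]
  have h2n : (2:ℝ)^n ≠ 0 := by positivity
  field_simp
  rw [← pow_mul, mul_comm n 2, pow_mul, pow_two, sqrt2_sq]
end

section
/- Let $G$ and $H$ be finite simple graphs with adjacency matrices $A_G$ and $A_H$, let $g_0$ be a vertex of $G$ and $h_0$ a vertex of $H$, and let $t^\star \in \mathbb{R}$. Then the continuous-time quantum walk on the Cartesian product $G \oplus H$ starting at vertex $(g_0, h_0)$ is instantaneous uniform mixing at time $t^\star$ if and only if the quantum walks on $G$ starting at $g_0$ and on $H$ starting at $h_0$ are both instantaneous uniform mixing at time $t^\star$. -/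
open Matrix Complex Kronecker

section aux
variable {m n : Type*} [Fintype m] [DecidableEq m] [Fintype n] [DecidableEq n]

/-- `M ↦ M ⊗ₖ 1` as a ring hom. -/
noncomputable def krL (m n : Type*) [Fintype m] [DecidableEq m] [Fintype n] [DecidableEq n] :
    Matrix m m ℂ →+* Matrix (m × n) (m × n) ℂ where
  toFun M := M ⊗ₖ (1 : Matrix n n ℂ)
  map_one' := Matrix.one_kronecker_one
  map_mul' M N := by rw [← Matrix.mul_kronecker_mul, Matrix.one_mul]
  map_zero' := Matrix.zero_kronecker 1
  map_add' M N := Matrix.add_kronecker M N 1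

noncomputable def krR (m n : Type*) [Fintype m] [DecidableEq m] [Fintype n] [DecidableEq n] :
    Matrix n n ℂ →+* Matrix (m × n) (m × n) ℂ where
  toFun M := (1 : Matrix m m ℂ) ⊗ₖ M
  map_one' := Matrix.one_kronecker_one
  map_mul' M N := by rw [← Matrix.mul_kronecker_mul, Matrix.one_mul]
  map_zero' := Matrix.kronecker_zero 1
  map_add' M N := Matrix.kronecker_add 1 M N

lemma continuous_krL : Continuous (krL m n) := by
  apply continuous_matrix
  intro i j
  simp [krL, Matrix.kroneckerMap_apply]
  exact (continuous_id.matrix_elem i.1 j.1).mul continuous_const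

lemma continuous_krR : Continuous (krR m n) := by
  apply continuous_matrix
  intro i j
  simp [krR, Matrix.kroneckerMap_apply]
  exact continuous_const.mul (continuous_id.matrix_elem i.2 j.2)

lemma exp_krL (M : Matrix m m ℂ) :
    NormedSpace.exp (M ⊗ₖ (1 : Matrix n n ℂ)) = (NormedSpace.exp M) ⊗ₖ 1 := by
  letI : SeminormedRing (Matrix m m ℂ) := Matrix.linftyOpSemiNormedRing
  letI : NormedRing (Matrix m m ℂ) := Matrix.linftyOpNormedRing
  letI : NormedAlgebra ℂ (Matrix m m ℂ) := Matrix.linftyOpNormedAlgebra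
  letI : NormedAlgebra ℚ (Matrix m m ℂ) := Matrix.linftyOpNormedAlgebra (R := ℚ)
  letI : SeminormedRing (Matrix (m × n) (m × n) ℂ) := Matrix.linftyOpSemiNormedRing
  letI : NormedRing (Matrix (m × n) (m × n) ℂ) := Matrix.linftyOpNormedRing
  letI : NormedAlgebra ℂ (Matrix (m × n) (m × n) ℂ) := Matrix.linftyOpNormedAlgebra
  exact (NormedSpace.map_exp (krL m n) continuous_krL M).symm

lemma exp_krR (M : Matrix n n ℂ) :
    NormedSpace.exp ((1 : Matrix m m ℂ) ⊗ₖ M) = 1 ⊗ₖ (NormedSpace.exp M) := by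
  letI : SeminormedRing (Matrix n n ℂ) := Matrix.linftyOpSemiNormedRing
  letI : NormedRing (Matrix n n ℂ) := Matrix.linftyOpNormedRing
  letI : NormedAlgebra ℂ (Matrix n n ℂ) := Matrix.linftyOpNormedAlgebra
  letI : NormedAlgebra ℚ (Matrix n n ℂ) := Matrix.linftyOpNormedAlgebra (R := ℚ)
  letI : SeminormedRing (Matrix (m × n) (m × n) ℂ) := Matrix.linftyOpSemiNormedRing
  letI : NormedRing (Matrix (m × n) (m × n) ℂ) := Matrix.linftyOpNormedRing
  letI : NormedAlgebra ℂ (Matrix (m × n) (m × n) ℂ) := Matrix.linftyOpNormedAlgebra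
  exact (NormedSpace.map_exp (krR m n) continuous_krR M).symm

/-- Norm preservation of the walk for Hermitian `A`. -/
lemma walk_sum_sq {V : Type*} [Fintype V] [DecidableEq V]
    (A : Matrix V V ℂ) (hA : A.IsHermitian) (v : V) (t : ℝ) :
    ∑ w, ‖(NormedSpace.exp ((-(t : ℂ) * Complex.I) • A)) w v‖ ^ 2 = 1 := by
  set X := (-(t : ℂ) * Complex.I) • A with hX
  set U := NormedSpace.exp X with hU
  have hconj : Uᴴ = NormedSpace.exp (-X) := by
    rw [hU, ← Matrix.exp_conjTranspose]
    congr 1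
    rw [hX, Matrix.conjTranspose_smul, hA.eq]
    simp [neg_smul]
  have hUU : Uᴴ * U = 1 := by
    rw [hconj, hU, ← Matrix.exp_add_of_commute _ _ (Commute.neg_left (Commute.refl X))]
    simp
  have hvv : (Uᴴ * U) v v = 1 := by rw [hUU]; simp
  have : ∑ w, ((‖U w v‖ : ℝ) : ℂ) ^ 2 = 1 := by
    rw [← hvv, Matrix.mul_apply]
    refine Finset.sum_congr rfl fun w _ => ?_
    rw [Matrix.conjTranspose_apply, Complex.star_def, ← Complex.normSq_eq_conj_mul_self]
    norm_cast
    exact Complex.sq_norm _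
  exact_mod_cast this

end aux

/-- The quantum walk on the Cartesian product `G ⊕ H` starting at `(g₀, h₀)` is
instantaneous uniform mixing at time `t⋆` iff the walks on `G` and `H` starting
at `g₀` and `h₀` are both instantaneous uniform mixing at time `t⋆`. -/
theorem cartesian_product_uniform_mixing_iff
    {VG VH : Type*} [Fintype VG] [DecidableEq VG] [Fintype VH] [DecidableEq VH]
    (G : SimpleGraph VG) (H : SimpleGraph VH)
    [DecidableRel G.Adj] [DecidableRel H.Adj]
    (g0 : VG) (h0 : VH) (tstar : ℝ) :
    (∀ w : VG × VH,
        ‖walk ((G.adjMatrix ℂ) ⊗ₖ (1 : Matrix VH VH ℂ)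
            + (1 : Matrix VG VG ℂ) ⊗ₖ (H.adjMatrix ℂ))
          (Pi.single (g0, h0) 1) tstar w‖ ^ 2
          = 1 / (Fintype.card (VG × VH))) ↔
      ((∀ g : VG,
          ‖walk (G.adjMatrix ℂ) (Pi.single g0 1) tstar g‖ ^ 2
            = 1 / (Fintype.card VG)) ∧
       (∀ h : VH,
          ‖walk (H.adjMatrix ℂ) (Pi.single h0 1) tstar h‖ ^ 2
            = 1 / (Fintype.card VH))) := by
  classical
  set c : ℂ := -(tstar : ℂ) * Complex.I with hc
  set AG := G.adjMatrix ℂ with hAG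
  set AH := H.adjMatrix ℂ with hAH
  set EG := NormedSpace.exp (c • AG) with hEG
  set EH := NormedSpace.exp (c • AH) with hEH
  -- factorize the exponential of the Kronecker sum
  have hsplit : NormedSpace.exp (c • (AG ⊗ₖ (1 : Matrix VH VH ℂ)
      + (1 : Matrix VG VG ℂ) ⊗ₖ AH)) = EG ⊗ₖ EH := by
    have h1 : c • (AG ⊗ₖ (1 : Matrix VH VH ℂ) + (1 : Matrix VG VG ℂ) ⊗ₖ AH)
        = (c • AG) ⊗ₖ (1 : Matrix VH VH ℂ) + (1 : Matrix VG VG ℂ) ⊗ₖ (c • AH) := by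
      rw [smul_add, Matrix.smul_kronecker, Matrix.kronecker_smul]
    have hcomm : Commute ((c • AG) ⊗ₖ (1 : Matrix VH VH ℂ))
        ((1 : Matrix VG VG ℂ) ⊗ₖ (c • AH)) := by
      unfold Commute SemiconjBy
      rw [← Matrix.mul_kronecker_mul, ← Matrix.mul_kronecker_mul, Matrix.mul_one,
        Matrix.one_mul, Matrix.mul_one, Matrix.one_mul]
    rw [h1, Matrix.exp_add_of_commute _ _ hcomm, exp_krL, exp_krR,
      ← Matrix.mul_kronecker_mul, Matrix.mul_one, Matrix.one_mul, ← hEG, ← hEH]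
  -- the product walk factorizes entrywise
  have hw : ∀ w : VG × VH,
      walk (AG ⊗ₖ (1 : Matrix VH VH ℂ) + (1 : Matrix VG VG ℂ) ⊗ₖ AH)
        (Pi.single (g0, h0) 1) tstar w = EG w.1 g0 * EH w.2 h0 := by
    intro w
    rw [walk, ← hc, hsplit, Matrix.mulVec_single]
    simp [Matrix.kroneckerMap_apply]
  have hwG : ∀ g, walk AG (Pi.single g0 1) tstar g = EG g g0 := by
    intro g; rw [walk, ← hc, ← hEG, Matrix.mulVec_single]; simp
  have hwH : ∀ h, walk AH (Pi.single h0 1) tstar h = EH h h0 := by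
    intro h; rw [walk, ← hc, ← hEH, Matrix.mulVec_single]; simp
  set a : VG → ℝ := fun g => ‖EG g g0‖ ^ 2 with ha
  set b : VH → ℝ := fun h => ‖EH h h0‖ ^ 2 with hb
  have hermG : AG.IsHermitian := by
    ext i j
    simp [hAG, Matrix.conjTranspose_apply, SimpleGraph.adjMatrix_apply, G.adj_comm i j]
  have hermH : AH.IsHermitian := by
    ext i j
    simp [hAH, Matrix.conjTranspose_apply, SimpleGraph.adjMatrix_apply, H.adj_comm i j]
  have hsumA : ∑ g, a g = 1 := walk_sum_sq AG hermG g0 tstar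
  have hsumB : ∑ h, b h = 1 := walk_sum_sq AH hermH h0 tstar
  have hnG : (0 : ℝ) < Fintype.card VG := by
    exact_mod_cast Fintype.card_pos_iff.mpr ⟨g0⟩
  have hnH : (0 : ℝ) < Fintype.card VH := by
    exact_mod_cast Fintype.card_pos_iff.mpr ⟨h0⟩
  constructor
  · intro hmix
    have key : ∀ g h, a g * b h = 1 / ((Fintype.card VG) * (Fintype.card VH)) := by
      intro g h
      have := hmix (g, h)
      rw [hw (g, h), norm_mul, mul_pow] at this
      simpa [Fintype.card_prod, ha, hb] using this
    constructor
    · intro g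
      rw [hwG]
      have : a g * (∑ h, b h) = ∑ _h : VH, (1 / ((Fintype.card VG : ℝ) * (Fintype.card VH))) := by
        rw [Finset.mul_sum]
        exact Finset.sum_congr rfl fun h _ => key g h
      rw [hsumB, mul_one, Finset.sum_const, Finset.card_univ, nsmul_eq_mul] at this
      have h' : ‖EG g g0‖ ^ 2
          = (Fintype.card VH : ℝ) * (1 / ((Fintype.card VG : ℝ) * (Fintype.card VH))) := this
      rw [h']
      have := hnG.ne'
      have := hnH.ne'
      field_simp
    · intro h
      rw [hwH]
      have : (∑ g, a g) * b h = ∑ _g : VG, (1 / ((Fintype.card VG : ℝ) * (Fintype.card VH))) := by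
        rw [Finset.sum_mul]
        exact Finset.sum_congr rfl fun g _ => key g h
      rw [hsumA, one_mul, Finset.sum_const, Finset.card_univ, nsmul_eq_mul] at this
      have h' : ‖EH h h0‖ ^ 2
          = (Fintype.card VG : ℝ) * (1 / ((Fintype.card VG : ℝ) * (Fintype.card VH))) := this
      rw [h']
      have := hnG.ne'
      have := hnH.ne'
      field_simp
  · rintro ⟨hG, hH⟩ w
    rw [hw w, norm_mul, mul_pow]
    have h1 := hG w.1; have h2 := hH w.2
    rw [hwG] at h1; rw [hwH] at h2
    rw [h1, h2, Fintype.card_prod]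
    push_cast
    field_simp
end
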